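/- arXiv:2205.05919 — 4 statements merged into one kernel-verified Lean document; each statement's English description precedes it below -/
import Mathlib

section
/- Let G and Ψ be Young functions such that lim_{t→0} Ψ(|t|)/G(|t|) = 0 and lim_{t→∞} Ψ(|t|)/G*(|t|) = 0, where G* is another Young function. Let (u_n) be a sequence of measurable functions on ℝ^N such that both (∫G(|u_n|)dx)_n and (∫G*(|u_n|)dx)_n are bounded, and for each τ > 0 the Lebesgue measure of {x : |u_n(x)| > τ} tends to 0 as n → ∞. Then ∫_{ℝ^N} Ψ(|u_n|) dx → 0 as n → ∞. -/
open Set Filter MeasureTheory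

/-- A Young function: continuous, convex, strictly increasing on `[0,∞)`,
vanishing at `0` and tending to `∞`. -/
def IsYoung (G : ℝ → ℝ) : Prop :=
  ContinuousOn G (Set.Ici 0) ∧ ConvexOn ℝ (Set.Ici 0) G ∧
    StrictMonoOn G (Set.Ici 0) ∧ G 0 = 0 ∧
    Filter.Tendsto G Filter.atTop Filter.atTop

/-!
Fix `η > 0`. The two limit hypotheses give `δ > 0` and `M` with `Ψ ≤ η G` on `(0, δ]` and
`Ψ ≤ η G*` on `[M, ∞)`; by monotonicity `Ψ ≤ Ψ M` in between, so for `t ≥ 0`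
`Ψ t ≤ η (G t + G* t) + Ψ M · 1_{t > δ}`. Integrating along `u n` gives
`∫ Ψ(|u n|) ≤ 2 η C + Ψ M · |{|u n| > δ}|`, whose limsup is at most `2 η C`; now let `η → 0`.
-/

open scoped ENNReal

namespace IsYoung

variable {G : ℝ → ℝ}

lemma map_zero (hG : IsYoung G) : G 0 = 0 := hG.2.2.2.1

lemma monotoneOn (hG : IsYoung G) : MonotoneOn G (Ici 0) := hG.2.2.1.monotoneOn

lemma nonneg (hG : IsYoung G) {t : ℝ} (ht : 0 ≤ t) : 0 ≤ G t := by
  simpa [hG.map_zero] using hG.monotoneOn self_mem_Ici (mem_Ici.2 ht) ht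

lemma pos (hG : IsYoung G) {t : ℝ} (ht : 0 < t) : 0 < G t := by
  simpa [hG.map_zero] using hG.2.2.1 self_mem_Ici (mem_Ici.2 ht.le) ht

lemma continuous_comp_abs (hG : IsYoung G) : Continuous fun t => G |t| :=
  hG.1.comp_continuous continuous_abs abs_nonneg

end IsYoung

lemma eventually_le_mul_of_tendsto_div {β : Type*} {l : Filter β} {f g : β → ℝ}
    (hfg : Tendsto (fun t => f t / g t) l (nhds 0)) (hg : ∀ᶠ t in l, 0 < g t)
    {η : ℝ} (hη : 0 < η) : ∀ᶠ t in l, f t ≤ η * g t := by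
  filter_upwards [hfg.eventually (eventually_lt_nhds hη), hg] with t hlt hpos
  exact ((div_lt_iff₀ hpos).1 hlt).le

lemma IsYoung.exists_le_add_indicator {G Ψ Gs : ℝ → ℝ}
    (hGY : IsYoung G) (hΨY : IsYoung Ψ) (hGsY : IsYoung Gs)
    (hlim0 : Tendsto (fun t : ℝ => Ψ |t| / G |t|) (nhdsWithin 0 {(0:ℝ)}ᶜ) (nhds 0))
    (hliminf : Tendsto (fun t : ℝ => Ψ |t| / Gs |t|) atTop (nhds 0))
    {η : ℝ} (hη : 0 < η) :
    ∃ δ > 0, ∃ M, ∀ t, 0 ≤ t →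
      Ψ t ≤ η * G t + η * Gs t + (Ioi δ).indicator (fun _ => Ψ M) t := by
  have hsmall : ∀ᶠ t in nhdsWithin 0 (Ioi 0), Ψ t ≤ η * G t := by
    have hpos : ∀ᶠ t : ℝ in nhdsWithin 0 (Ioi 0), 0 < t := self_mem_nhdsWithin
    have hle := eventually_le_mul_of_tendsto_div
      (hlim0.mono_left (nhdsWithin_mono _ fun t ht => ne_of_gt ht))
      (hpos.mono fun t ht => hGY.pos (abs_pos.2 ht.ne')) hη
    filter_upwards [hle, hpos] with t ht ht0
    simpa [abs_of_pos ht0] using ht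
  have hlarge : ∀ᶠ t in atTop, Ψ t ≤ η * Gs t ∧ 0 ≤ t := by
    have hle := eventually_le_mul_of_tendsto_div hliminf
      ((eventually_gt_atTop 0).mono fun t ht => hGsY.pos (abs_pos.2 ht.ne')) hη
    filter_upwards [hle, eventually_ge_atTop 0] with t ht ht0
    exact ⟨by simpa [abs_of_nonneg ht0] using ht, ht0⟩
  obtain ⟨δ, hδ, hδsmall⟩ := mem_nhdsGT_iff_exists_Ioc_subset.1 hsmall
  obtain ⟨M, hM⟩ := eventually_atTop.1 hlarge
  refine ⟨δ, hδ, M, fun t ht => ?_⟩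
  have hGt := hGY.nonneg ht
  have hGst := hGsY.nonneg ht
  have hΨM := hΨY.nonneg (hM M le_rfl).2
  by_cases htδ : δ < t
  · rw [indicator_of_mem (mem_Ioi.2 htδ)]
    rcases le_total t M with htM | hMt
    · have hΨtM : Ψ t ≤ Ψ M := hΨY.monotoneOn ht (hM M le_rfl).2 htM
      nlinarith
    · nlinarith [(hM t hMt).1]
  · rw [indicator_of_notMem (by simpa using htδ)]
    rcases ht.eq_or_lt with rfl | ht0
    · simp [hGY.map_zero, hΨY.map_zero, hGsY.map_zero]
    · have hΨG : Ψ t ≤ η * G t := hδsmall ⟨ht0, not_lt.1 htδ⟩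
      nlinarith

lemma lintegral_ofReal_comp_abs_le {α : Type*} [MeasurableSpace α] {μ : Measure α}
    {G Ψ Gs : ℝ → ℝ} (hG : Measurable fun t => G |t|) (hGs : Measurable fun t => Gs |t|)
    {f : α → ℝ} (hf : Measurable f) {η δ M : ℝ} (hη : 0 ≤ η)
    (hbound : ∀ t, 0 ≤ t → Ψ t ≤ η * G t + η * Gs t + (Ioi δ).indicator (fun _ => Ψ M) t) :
    ∫⁻ x, ENNReal.ofReal (Ψ |f x|) ∂μ ≤
      ENNReal.ofReal η * (∫⁻ x, ENNReal.ofReal (G |f x|) ∂μ +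
        ∫⁻ x, ENNReal.ofReal (Gs |f x|) ∂μ) + ENNReal.ofReal (Ψ M) * μ {x | δ < |f x|} := by
  have hs : MeasurableSet {x | δ < |f x|} := measurableSet_lt measurable_const hf.abs
  have hGf : Measurable fun x => ENNReal.ofReal (G |f x|) := (hG.comp hf).ennreal_ofReal
  have hGsf : Measurable fun x => ENNReal.ofReal (Gs |f x|) := (hGs.comp hf).ennreal_ofReal
  have hpt : ∀ x, ENNReal.ofReal (Ψ |f x|) ≤ ENNReal.ofReal η * ENNReal.ofReal (G |f x|) +
      ENNReal.ofReal η * ENNReal.ofReal (Gs |f x|) +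
      {x | δ < |f x|}.indicator (fun _ => ENNReal.ofReal (Ψ M)) x := by
    intro x
    grw [hbound _ (abs_nonneg _), ENNReal.ofReal_add_le, ENNReal.ofReal_add_le,
      ENNReal.ofReal_mul hη, ENNReal.ofReal_mul hη]
    by_cases h : δ < |f x| <;> simp [h]
  calc ∫⁻ x, ENNReal.ofReal (Ψ |f x|) ∂μ ≤ _ := lintegral_mono hpt
    _ = _ := by
      rw [lintegral_add_right _ (measurable_const.indicator hs),
        lintegral_add_left (hGf.const_mul _), lintegral_const_mul _ hGf,
        lintegral_const_mul _ hGsf, lintegral_indicator_const hs, mul_add]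

lemma ENNReal.tendsto_zero_of_forall_le_ofReal_mul_add {f : ℕ → ℝ≥0∞} {c : ℝ≥0∞} (hc : c ≠ ⊤)
    (h : ∀ η : ℝ, 0 < η → ∃ b : ℕ → ℝ≥0∞, Tendsto b atTop (nhds 0) ∧
      ∀ n, f n ≤ ENNReal.ofReal η * c + b n) :
    Tendsto f atTop (nhds 0) := by
  have hlimsup : ∀ η : ℝ, 0 < η → limsup f atTop ≤ ENNReal.ofReal η * c := by
    intro η hη
    obtain ⟨b, hb, hfb⟩ := h η hη
    calc limsup f atTop ≤ limsup (fun n => ENNReal.ofReal η * c + b n) atTop :=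
          limsup_le_limsup (Eventually.of_forall hfb)
      _ = ENNReal.ofReal η * c := by
          simpa using (tendsto_const_nhds.add hb).limsup_eq
  have hscale : Tendsto (fun η : ℝ => ENNReal.ofReal η * c) (nhdsWithin 0 (Ioi 0)) (nhds 0) := by
    simpa using ENNReal.Tendsto.mul_const
      (ENNReal.tendsto_ofReal (tendsto_nhdsWithin_of_tendsto_nhds (tendsto_id (x := nhds (0:ℝ)))))
      (Or.inr hc)
  have hzero : limsup f atTop ≤ 0 :=
    ge_of_tendsto hscale (eventually_nhdsWithin_of_forall hlimsup)
  exact tendsto_of_le_liminf_of_limsup_le bot_le hzero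

theorem stmt_5 {N : ℕ} (G Ψ Gs : ℝ → ℝ)
    (hGY : IsYoung G) (hΨY : IsYoung Ψ) (hGsY : IsYoung Gs)
    (hlim0 : Filter.Tendsto (fun t : ℝ => Ψ |t| / G |t|)
      (nhdsWithin 0 {(0:ℝ)}ᶜ) (nhds 0))
    (hliminf : Filter.Tendsto (fun t : ℝ => Ψ |t| / Gs |t|)
      Filter.atTop (nhds 0))
    (u : ℕ → EuclideanSpace ℝ (Fin N) → ℝ)
    (hmeas : ∀ n, Measurable (u n))
    (hbdd : ∃ C : ℝ, ∀ n,
      (∫⁻ x, ENNReal.ofReal (G |u n x|)) ≤ ENNReal.ofReal C ∧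
      (∫⁻ x, ENNReal.ofReal (Gs |u n x|)) ≤ ENNReal.ofReal C)
    (hvanish : ∀ τ > (0:ℝ),
      Filter.Tendsto (fun n => volume {x | τ < |u n x|}) Filter.atTop (nhds 0)) :
    Filter.Tendsto (fun n => ∫⁻ x, ENNReal.ofReal (Ψ |u n x|))
      Filter.atTop (nhds 0) := by
  obtain ⟨C, hC⟩ := hbdd
  refine ENNReal.tendsto_zero_of_forall_le_ofReal_mul_add
    (c := ENNReal.ofReal C + ENNReal.ofReal C) (by simp) fun η hη => ?_
  obtain ⟨δ, hδ, M, hbound⟩ := hGY.exists_le_add_indicator hΨY hGsY hlim0 hliminf hη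
  refine ⟨fun n => ENNReal.ofReal (Ψ M) * volume {x | δ < |u n x|}, ?_, fun n => ?_⟩
  · simpa using ENNReal.Tendsto.const_mul (hvanish δ hδ) (Or.inr ENNReal.ofReal_ne_top)
  · grw [lintegral_ofReal_comp_abs_le hGY.continuous_comp_abs.measurable
      hGsY.continuous_comp_abs.measurable (hmeas n) hη.le hbound, (hC n).1, (hC n).2]
end

section
/- Let f : ℝ → ℝ be continuous with primitive F(t) = ∫₀ᵗ f(τ)dτ, and suppose there exists θ > 0 such that 0 < θ·F(t) ≤ f(t)·t for all t ≠ 0. Then there exists a constant C > 0 such that F(t) ≥ C·|t|^θ for all |t| ≥ 1. -/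
/-! The Ambrosetti–Rabinowitz inequality `θ F(t) ≤ f(t) t` says exactly that `F(t) t^{-θ}` is
nondecreasing on `(0, ∞)`, since its derivative is `t^{-θ-1} (f(t) t - θ F(t))`. Hence
`F(t) ≥ F(1) t^θ` for `t ≥ 1`; applying this to `t ↦ F(-t)` gives `F(t) ≥ F(-1) |t|^θ` for
`t ≤ -1`, and `C = min (F 1) (F (-1))` is positive because `θ F(±1) > 0`. -/

open Set

section GrowthFromAR

variable {f F : ℝ → ℝ} {θ : ℝ}

lemma hasDerivAt_mul_rpow_neg {s : ℝ} (hs : 0 < s) (hF : HasDerivAt F (f s) s) :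
    HasDerivAt (fun x => F x * x ^ (-θ)) (s ^ (-θ - 1) * (f s * s - θ * F s)) s := by
  refine (hF.mul (Real.hasDerivAt_rpow_const (p := -θ) (Or.inl hs.ne'))).congr_deriv ?_
  have hsplit : s ^ (-θ) = s ^ (-θ - 1) * s := by
    rw [← Real.rpow_add_one hs.ne']
    ring_nf
  rw [hsplit]
  ring

lemma monotoneOn_mul_rpow_neg (hF : ∀ s, 0 < s → HasDerivAt F (f s) s)
    (hAR : ∀ s, 0 < s → θ * F s ≤ f s * s) :
    MonotoneOn (fun x => F x * x ^ (-θ)) (Ioi 0) := by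
  have hderiv := fun s (hs : s ∈ Ioi (0 : ℝ)) => hasDerivAt_mul_rpow_neg (θ := θ) hs (hF s hs)
  refine monotoneOn_of_hasDerivWithinAt_nonneg (convex_Ioi 0)
    (fun s hs => (hderiv s hs).continuousAt.continuousWithinAt)
    (fun s hs => (hderiv s (interior_subset hs)).hasDerivWithinAt) fun s hs => ?_
  rw [interior_Ioi] at hs
  exact mul_nonneg (Real.rpow_nonneg hs.le _) (sub_nonneg.mpr (hAR s hs))

lemma mul_rpow_le_of_hasDerivAt (hF : ∀ s, 0 < s → HasDerivAt F (f s) s)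
    (hAR : ∀ s, 0 < s → θ * F s ≤ f s * s) {t : ℝ} (ht : 1 ≤ t) :
    F 1 * t ^ θ ≤ F t := by
  have ht₀ : 0 < t := zero_lt_one.trans_le ht
  have hmono : F 1 ≤ F t * t ^ (-θ) := by
    simpa using monotoneOn_mul_rpow_neg hF hAR (mem_Ioi.mpr zero_lt_one) (mem_Ioi.mpr ht₀) ht
  calc F 1 * t ^ θ ≤ F t * t ^ (-θ) * t ^ θ := by gcongr
    _ = F t := by rw [mul_assoc, ← Real.rpow_add ht₀, neg_add_cancel, Real.rpow_zero, mul_one]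

end GrowthFromAR

theorem stmt_8 (f F : ℝ → ℝ) (θ : ℝ) (hθ : 0 < θ)
    (hf : Continuous f)
    (hF : ∀ t : ℝ, F t = ∫ τ in (0:ℝ)..t, f τ)
    (hAR : ∀ t : ℝ, t ≠ 0 → 0 < θ * F t ∧ θ * F t ≤ f t * t) :
    ∃ C > (0:ℝ), ∀ t : ℝ, 1 ≤ |t| → C * |t| ^ θ ≤ F t := by
  have hFd : ∀ s, HasDerivAt F (f s) s := fun s => by
    rw [funext hF]
    exact (hf.integral_hasStrictDerivAt 0 s).hasDerivAt
  have hpos : ∀ t, 1 ≤ t → F 1 * t ^ θ ≤ F t :=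
    fun t => mul_rpow_le_of_hasDerivAt (fun s _ => hFd s) fun s hs => (hAR s hs.ne').2
  have hneg : ∀ t, 1 ≤ t → F (-1) * t ^ θ ≤ F (-t) := fun t =>
    mul_rpow_le_of_hasDerivAt (f := fun s => -f (-s)) (F := fun s => F (-s))
      (fun s _ => by simpa [Function.comp_def] using (hFd (-s)).comp s (hasDerivAt_neg s))
      fun s hs => by simpa [neg_mul_comm] using (hAR (-s) (neg_ne_zero.mpr hs.ne')).2
  have hF₁ : 0 < F 1 := pos_of_mul_pos_right (hAR 1 one_ne_zero).1 hθ.le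
  have hFm₁ : 0 < F (-1) := pos_of_mul_pos_right (hAR (-1) (by norm_num)).1 hθ.le
  refine ⟨min (F 1) (F (-1)), lt_min hF₁ hFm₁, fun t ht => ?_⟩
  rcases le_total 0 t with h₀ | h₀
  · rw [abs_of_nonneg h₀] at ht ⊢
    exact (mul_le_mul_of_nonneg_right (min_le_left _ _) (by positivity)).trans (hpos t ht)
  · rw [abs_of_nonpos h₀] at ht ⊢
    simpa using (mul_le_mul_of_nonneg_right (min_le_right _ _) (by positivity)).trans
      (hneg (-t) ht)
end

section
/- Let G be a Young function satisfying 1 < p⁻ ≤ t·g(t)/G(t) ≤ p⁺ and let f be continuous with primitive F, satisfying: for every ε > 0 there is C_ε > 0 with 0 ≤ F(t) ≤ ε·G(|t|) + C_ε·M(|t|) for all t, where M is a Young function with p⁺ < m⁻ ≤ t·m(t)/M(t) ≤ m⁺. Suppose the norms satisfy ‖u‖_{L^M} ≤ C(‖u‖_{L^G} + [u]) for a seminorm [·], and the modular bounds Φ(u) ≥ ξ⁻(norms) hold as in Lemma 2.2. Then the functional T(u) = ∫∫ G(|D_s u|) dμ + ∫G(|u|)dx − ∫F(u)dx satisfies: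 there exist ρ > 0 and δ_ρ > 0 with T(u) ≥ δ_ρ whenever ‖u‖_{L^G} + [u] = ρ. -/
open Set Filter

/-- Mountain-pass geometry (i) for the energy functional `T = J + I - F` on the
fractional Orlicz–Sobolev space, formulated in terms of the modulars
`J u = ∬ G(|D_s u|) dμ`, `I u = ∫ G(|u|) dx`, `F u = ∫ F(u) dx`,
`Mm u = ∫ M(|u|) dx`, the Luxemburg norm `nG`, the Gagliardo seminorm `sem`
and the `L^M`-norm `nM`, together with the modular–norm inequalities of
Lemma 2.2 and the pointwise bound `F(t) ≤ ε G(|t|) + C_ε M(|t|)`. -/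
theorem stmt_16 {X : Type*} (pm pp mm mp : ℝ)
    (hpm : 1 < pm) (hpp : pm ≤ pp) (hppmm : pp < mm) (hmm : mm ≤ mp)
    (J I Fm Mm : X → ℝ) (nG sem nM : X → ℝ)
    (hnneg : ∀ u, 0 ≤ nG u ∧ 0 ≤ sem u ∧ 0 ≤ nM u)
    -- modular lower bounds `ξ⁻(norm) ≤ modular` (Lemma 2.2)
    (hJ : ∀ u, min (sem u ^ pm) (sem u ^ pp) ≤ J u)
    (hI : ∀ u, min (nG u ^ pm) (nG u ^ pp) ≤ I u)
    -- modular upper bound for `M` : `modular ≤ ξ⁺(norm)`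
    (hMm : ∀ u, Mm u ≤ max (nM u ^ mm) (nM u ^ mp))
    -- the continuous embedding `‖u‖_{L^M} ≤ C(‖u‖_{L^G} + [u])`
    (hemb : ∃ C > (0:ℝ), ∀ u, nM u ≤ C * (nG u + sem u))
    -- consequence of `0 ≤ F(t) ≤ ε G(|t|) + C_ε M(|t|)` after integration
    (hF : ∀ ε > (0:ℝ), ∃ C > (0:ℝ), ∀ u, 0 ≤ Fm u ∧ Fm u ≤ ε * I u + C * Mm u) :
    ∃ ρ > (0:ℝ), ∃ δ > (0:ℝ), ∀ u : X,
      nG u + sem u = ρ → δ ≤ J u + I u - Fm u := by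
  obtain ⟨E, hEpos, hE⟩ := hemb
  obtain ⟨C, hCpos, hC⟩ := hF (1/2) (by norm_num)
  have hpmpos : (0:ℝ) < pm := lt_trans one_pos hpm
  have hpppos : (0:ℝ) < pp := lt_of_lt_of_le hpmpos hpp
  have hmmpos : (0:ℝ) < mm := lt_trans hpppos hppmm
  have hmppos : (0:ℝ) < mp := lt_of_lt_of_le hmmpos hmm
  -- helper : min/max collapse for t ∈ [0,1]
  have keymin : ∀ t : ℝ, 0 ≤ t → t ≤ 1 → min (t ^ pm) (t ^ pp) = t ^ pp := by
    intro t h0 h1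
    rcases eq_or_lt_of_le h0 with h | h
    · simp [← h, Real.zero_rpow (ne_of_gt hpmpos), Real.zero_rpow (ne_of_gt hpppos)]
    · exact min_eq_right (Real.rpow_le_rpow_of_exponent_ge h h1 hpp)
  have keymax : ∀ t : ℝ, 0 ≤ t → t ≤ 1 → max (t ^ mm) (t ^ mp) = t ^ mm := by
    intro t h0 h1
    rcases eq_or_lt_of_le h0 with h | h
    · simp [← h, Real.zero_rpow (ne_of_gt hmmpos), Real.zero_rpow (ne_of_gt hmppos)]
    · exact max_eq_left (Real.rpow_le_rpow_of_exponent_ge h h1 hmm)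
  -- the constant A and the radius ρ
  set A : ℝ := (2:ℝ) ^ (-pp) / (4 * C * E ^ mm) with hA
  have hEmm : (0:ℝ) < E ^ mm := Real.rpow_pos_of_pos hEpos mm
  have hApos : 0 < A := by
    apply div_pos (Real.rpow_pos_of_pos two_pos _)
    positivity
  set ρ : ℝ := min (min 1 (1 / E)) (A ^ (mm - pp)⁻¹) with hρ
  have hρpos : 0 < ρ := by
    apply lt_min (lt_min one_pos (by positivity))
    exact Real.rpow_pos_of_pos hApos _
  have hρ1 : ρ ≤ 1 := le_trans (min_le_left _ _) (min_le_left _ _)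
  have hρE : ρ ≤ 1 / E := le_trans (min_le_left _ _) (min_le_right _ _)
  have hρA : ρ ^ (mm - pp) ≤ A := by
    calc ρ ^ (mm - pp) ≤ (A ^ (mm - pp)⁻¹) ^ (mm - pp) :=
          Real.rpow_le_rpow hρpos.le (min_le_right _ _) (by linarith)
      _ = A := Real.rpow_inv_rpow hApos.le (by linarith)
  refine ⟨ρ, hρpos, (1/4) * (ρ/2) ^ pp, by positivity, ?_⟩
  intro u hu
  obtain ⟨hnG0, hsem0, hnM0⟩ := hnneg u
  have hsem1 : sem u ≤ 1 := by
    calc sem u ≤ ρ := by linarith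
      _ ≤ 1 := hρ1
  have hnG1 : nG u ≤ 1 := by
    calc nG u ≤ ρ := by linarith
      _ ≤ 1 := hρ1
  have hJu : sem u ^ pp ≤ J u := by
    have := hJ u; rwa [keymin _ hsem0 hsem1] at this
  have hIu : nG u ^ pp ≤ I u := by
    have := hI u; rwa [keymin _ hnG0 hnG1] at this
  -- bound on Mm
  have hnMρ : nM u ≤ E * ρ := by
    have := hE u; rw [hu] at this; exact this
  have hEρ1 : E * ρ ≤ 1 := by
    rw [← le_div_iff₀' hEpos]; exact hρE
  have hnM1 : nM u ≤ 1 := le_trans hnMρ hEρ1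
  have hMmu : Mm u ≤ (E * ρ) ^ mm := by
    have h1 := hMm u
    rw [keymax _ hnM0 hnM1] at h1
    exact le_trans h1 (Real.rpow_le_rpow hnM0 hnMρ hmmpos.le)
  -- key smallness : C * (E*ρ)^mm ≤ (1/4) * (ρ/2)^pp
  have hsmall : C * (E * ρ) ^ mm ≤ (1/4) * (ρ/2) ^ pp := by
    have h1 : (E * ρ) ^ mm = E ^ mm * (ρ ^ pp * ρ ^ (mm - pp)) := by
      rw [Real.mul_rpow hEpos.le hρpos.le, ← Real.rpow_add hρpos]
      ring_nf
    have h2 : (ρ/2) ^ pp = ρ ^ pp * (2:ℝ) ^ (-pp) := by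
      rw [Real.div_rpow hρpos.le (by norm_num : (0:ℝ) ≤ 2), Real.rpow_neg (by norm_num), div_eq_mul_inv]
    rw [h1, h2]
    have hρpp : (0:ℝ) < ρ ^ pp := Real.rpow_pos_of_pos hρpos _
    have h3 : C * E ^ mm * ρ ^ (mm - pp) ≤ (1/4) * (2:ℝ) ^ (-pp) := by
      have := mul_le_mul_of_nonneg_left hρA (by positivity : (0:ℝ) ≤ C * E ^ mm)
      calc C * E ^ mm * ρ ^ (mm - pp) ≤ C * E ^ mm * A := this
        _ = (1/4) * (2:ℝ) ^ (-pp) := by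
            rw [hA]; field_simp
      
    calc C * (E ^ mm * (ρ ^ pp * ρ ^ (mm - pp)))
        = (C * E ^ mm * ρ ^ (mm - pp)) * ρ ^ pp := by ring
      _ ≤ ((1/4) * (2:ℝ) ^ (-pp)) * ρ ^ pp :=
          mul_le_mul_of_nonneg_right h3 hρpp.le
      _ = 1/4 * (ρ ^ pp * 2 ^ (-pp)) := by ring
  -- lower bound (ρ/2)^pp ≤ sem^pp + nG^pp
  have hhalf : (ρ/2) ^ pp ≤ sem u ^ pp + nG u ^ pp := by
    have hsemnn : (0:ℝ) ≤ sem u ^ pp := Real.rpow_nonneg hsem0 _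
    have hnGnn : (0:ℝ) ≤ nG u ^ pp := Real.rpow_nonneg hnG0 _
    rcases le_total (ρ/2) (sem u) with h | h
    · have := Real.rpow_le_rpow (by positivity) h hpppos.le
      linarith
    · have h' : ρ/2 ≤ nG u := by linarith
      have := Real.rpow_le_rpow (by positivity) h' hpppos.le
      linarith
  have hFu := (hC u).2
  have hMm' : C * Mm u ≤ C * (E * ρ) ^ mm :=
    mul_le_mul_of_nonneg_left hMmu hCpos.le
  have hsemnn : (0:ℝ) ≤ sem u ^ pp := Real.rpow_nonneg hsem0 _
  have hnGnn : (0:ℝ) ≤ nG u ^ pp := Real.rpow_nonneg hnG0 _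
  nlinarith [hJu, hIu, hFu, hMm', hsmall, hhalf]
end

section
/- Let θ > p⁺ ≥ 1, let G be a Young function with p⁻ ≤ tg(t)/G(t) ≤ p⁺, and F satisfying F(t) ≥ C₅|t|^θ for all t. Let ψ be a nonzero smooth compactly supported function. Then the map t ↦ T(tψ) = ∫∫G(t|D_sψ|)dμ + ∫G(t|ψ|)dx − ∫F(tψ)dx tends to −∞ as t → +∞. -/
open Set Filter MeasureTheory

set_option maxHeartbeats 1000000 in
theorem stmt_17 {N : ℕ} (s pm pp θ C₅ : ℝ) (g G F : ℝ → ℝ)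
    (hs0 : 0 < s) (hs1 : s < 1)
    (hG : ∀ t : ℝ, G t = ∫ τ in Set.Ioc (0:ℝ) t, g τ)
    (hg0 : g 0 = 0) (hgpos : ∀ t > (0:ℝ), 0 < g t)
    (hgmono : MonotoneOn g (Set.Ioi 0))
    (hginf : Filter.Tendsto g Filter.atTop Filter.atTop)
    (hpm : 1 ≤ pm) (hpp : pm ≤ pp) (hθ : pp < θ)
    (hstruct : ∀ t > (0:ℝ), pm ≤ t * g t / G t ∧ t * g t / G t ≤ pp)
    (hC₅ : 0 < C₅) (hF : ∀ t : ℝ, C₅ * |t| ^ θ ≤ F t)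
    (ψ : EuclideanSpace ℝ (Fin N) → ℝ)
    (hψsmooth : ContDiff ℝ (⊤ : ℕ∞) ψ) (hψsupp : HasCompactSupport ψ) (hψne : ψ ≠ 0)
    -- `ψ ∈ C_c^∞ ⊂ W^{s,G}` : the modulars of `tψ` are finite
    (hJint : ∀ t : ℝ, Integrable (fun z : EuclideanSpace ℝ (Fin N) × EuclideanSpace ℝ (Fin N) =>
      G (|t| * (|ψ z.1 - ψ z.2| / ‖z.1 - z.2‖ ^ s)) / ‖z.1 - z.2‖ ^ (N : ℝ)))
    (hIint : ∀ t : ℝ, Integrable (fun x => G (|t| * |ψ x|)))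
    (hFint : ∀ t : ℝ, Integrable (fun x => F (t * ψ x))) :
    Filter.Tendsto (fun t : ℝ =>
      (∫ z : EuclideanSpace ℝ (Fin N) × EuclideanSpace ℝ (Fin N),
        G (|t| * (|ψ z.1 - ψ z.2| / ‖z.1 - z.2‖ ^ s)) / ‖z.1 - z.2‖ ^ (N : ℝ)) +
      (∫ x, G (|t| * |ψ x|)) - ∫ x, F (t * ψ x))
      Filter.atTop Filter.atBot := by
  have hpp1 : (1:ℝ) ≤ pp := hpm.trans hpp
  have hpp0 : (0:ℝ) < pp := by linarith
  have hθ0 : (0:ℝ) < θ := by linarith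
  have hstruct' : ∀ t > (0:ℝ), t * g t / G t ≤ pp := fun t ht => (hstruct t ht).2
  -- modified g
  set g₁ : ℝ → ℝ := fun τ => if τ ≤ 0 then 0 else g τ with hg₁def
  have hg₁mono : Monotone g₁ := by
    intro a b hab
    by_cases ha : a ≤ 0
    · by_cases hb : b ≤ 0
      · simp [hg₁def, ha, hb]
      · simp only [hg₁def, if_pos ha, if_neg hb]
        exact (hgpos b (lt_of_not_ge hb)).le
    · have hb : ¬ b ≤ 0 := fun h => ha (hab.trans h)
      simp only [hg₁def, if_neg ha, if_neg hb]
      exact hgmono (lt_of_not_ge ha) (lt_of_not_ge hb) hab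
  have hg₁nonneg : ∀ τ, 0 ≤ g₁ τ := by
    intro τ
    by_cases h : τ ≤ 0
    · simp [hg₁def, h]
    · simpa [hg₁def, h] using (hgpos τ (lt_of_not_ge h)).le
  have hGalt : ∀ t, G t = ∫ τ in Set.Ioc (0:ℝ) t, g₁ τ := by
    intro t
    rw [hG t]
    refine setIntegral_congr_fun measurableSet_Ioc (fun τ hτ => ?_)
    simp [hg₁def, not_le.2 hτ.1]
  have hGint : ∀ t : ℝ, IntegrableOn g₁ (Set.Ioc 0 t) := fun t =>
    ((hg₁mono.monotoneOn _).integrableOn_isCompact isCompact_Icc).mono_set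
      Set.Ioc_subset_Icc_self
  have hGintIoc : ∀ a b : ℝ, IntegrableOn g₁ (Set.Ioc a b) := fun a b =>
    ((hg₁mono.monotoneOn _).integrableOn_isCompact isCompact_Icc).mono_set
      Set.Ioc_subset_Icc_self
  have hGmono : Monotone G := by
    intro a b hab
    rw [hGalt a, hGalt b]
    exact setIntegral_mono_set (hGint b) (Filter.Eventually.of_forall hg₁nonneg)
      (HasSubset.Subset.eventuallyLE (Set.Ioc_subset_Ioc_right hab))
  have hGnonneg : ∀ t, 0 ≤ G t := fun t => by
    rw [hGalt t]; exact setIntegral_nonneg measurableSet_Ioc fun τ _ => hg₁nonneg τ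
  have hGpos : ∀ a > (0:ℝ), 0 < G a := by
    intro a ha
    have h1 : (0:ℝ) < g (a/2) := hgpos _ (by linarith)
    have h2 : ∫ τ in Set.Ioc (a/2) a, g₁ τ ≥ ∫ τ in Set.Ioc (a/2) a, g (a/2) := by
      refine setIntegral_mono_on (integrableOn_const measure_Ioc_lt_top.ne)
        (hGintIoc _ _) measurableSet_Ioc (fun τ hτ => ?_)
      have hτ0 : ¬ τ ≤ 0 := by push_neg; linarith [hτ.1]
      simp only [hg₁def, if_neg hτ0]
      exact hgmono (by simp; linarith) (by simp; linarith [hτ.1]) hτ.1.le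
    have h3 : ∫ τ in Set.Ioc (a/2) a, (g (a/2) : ℝ) = g (a/2) * (a - a/2) := by
      simp [Real.volume_Ioc, ENNReal.toReal_ofReal (by linarith : (0:ℝ) ≤ a - a/2)]
      ring_nf
      rw [max_eq_left]
      · ring
      · linarith
    have h4 : ∫ τ in Set.Ioc (a/2) a, g₁ τ ≤ ∫ τ in Set.Ioc (0:ℝ) a, g₁ τ :=
      setIntegral_mono_set (hGint a) (Filter.Eventually.of_forall hg₁nonneg)
        (HasSubset.Subset.eventuallyLE (Set.Ioc_subset_Ioc_left (by linarith)))
    rw [hGalt a]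
    nlinarith
  have key1 : ∀ a > (0:ℝ), ∀ μ > (1:ℝ),
      G (μ * a) * (1 - pp * Real.log μ) ≤ G a := by
    intro a ha μ hμ
    have hμ0 : (0:ℝ) < μ := by linarith
    have hma : a < μ * a := by nlinarith
    have hsplit : G (μ * a) = G a + ∫ τ in Set.Ioc a (μ*a), g₁ τ := by
      rw [hGalt, hGalt]
      rw [← setIntegral_union (Set.Ioc_disjoint_Ioc_of_le le_rfl) measurableSet_Ioc (hGint a)
        (hGintIoc a (μ*a)), Set.Ioc_union_Ioc_eq_Ioc ha.le hma.le]
    have hbound : ∀ τ ∈ Set.Ioc a (μ*a), g₁ τ ≤ pp * G (μ*a) / τ := by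
      intro τ hτ
      have hτ0 : 0 < τ := lt_trans ha hτ.1
      have hGτ : 0 < G τ := hGpos τ hτ0
      have h1 : τ * g τ / G τ ≤ pp := hstruct' τ hτ0
      have h2 : τ * g τ ≤ pp * G τ := by
        rw [div_le_iff₀ hGτ] at h1; linarith
      have h3 : g τ ≤ pp * G τ / τ := by
        rw [le_div_iff₀ hτ0]; nlinarith
      have h4 : G τ ≤ G (μ*a) := hGmono hτ.2
      have : pp * G τ / τ ≤ pp * G (μ*a) / τ := by
        gcongr
        all_goals nlinarith
      simp only [hg₁def, if_neg (not_le.2 hτ0)]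
      linarith
    have hint1 : IntegrableOn (fun τ => pp * G (μ*a) / τ) (Set.Ioc a (μ*a)) := by
      apply ContinuousOn.integrableOn_compact isCompact_Icc ?_ |>.mono_set Set.Ioc_subset_Icc_self
      apply ContinuousOn.div continuousOn_const continuousOn_id
      intro x hx; simp at hx ⊢; linarith [hx.1]
    have hint2 : ∫ τ in Set.Ioc a (μ*a), pp * G (μ*a) / τ = pp * G (μ*a) * Real.log μ := by
      have : ∫ τ in Set.Ioc a (μ*a), pp * G (μ*a) / τ
          = ∫ τ in a..(μ*a), pp * G (μ*a) * τ⁻¹ := by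
        rw [intervalIntegral.integral_of_le hma.le]
        simp [div_eq_mul_inv]
      rw [this, intervalIntegral.integral_const_mul, integral_inv (by
        intro h
        rcases Set.mem_uIcc.1 h with h | h <;> nlinarith [h.1, h.2])]
      rw [Real.log_div (by positivity) (ne_of_gt ha)]
      have : Real.log (μ * a) = Real.log μ + Real.log a := Real.log_mul (by positivity) (ne_of_gt ha)
      rw [this]; ring
    have hle : ∫ τ in Set.Ioc a (μ*a), g₁ τ ≤ pp * G (μ*a) * Real.log μ := by
      rw [← hint2]
      exact setIntegral_mono_on (hGintIoc a (μ*a)) hint1 measurableSet_Ioc hbound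
    nlinarith [hsplit, hle]

  -- choose exponent q with pp ≤ q < θ
  set ε : ℝ := (θ - pp) / (2 * pp * θ) with hεdef
  have hε0 : 0 < ε := by
    apply div_pos (by linarith) (by positivity)
  have hppε : pp * ε = (θ - pp) / (2 * θ) := by
    rw [hεdef]; field_simp
  have hx1 : pp * ε < 1 := by
    rw [hppε, div_lt_one (by positivity)]; linarith
  have hx0 : 0 < 1 - pp * ε := by linarith
  set q : ℝ := pp / (1 - pp * ε) with hqdef
  have hq0 : 0 < q := div_pos hpp0 hx0
  have hqθ : q < θ := by
    rw [hqdef, div_lt_iff₀ hx0, hppε]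
    have h1 : (1 : ℝ) - (θ - pp) / (2 * θ) = (θ + pp) / (2 * θ) := by
      field_simp; ring
    have h2 : θ * ((θ + pp) / (2 * θ)) = (θ + pp) / 2 := by
      field_simp
    rw [h1, h2]
    rw [lt_div_iff₀ (by norm_num : (0:ℝ) < 2)]
    linarith
  have hεq : ε * q = pp * ε / (1 - pp * ε) := by
    rw [hqdef]; ring
  have hKle : 1 / (1 - pp * ε) ≤ Real.exp (ε * q) := by
    have h1 : 1 + pp * ε / (1 - pp * ε) ≤ Real.exp (pp * ε / (1 - pp * ε)) := by
      have := Real.add_one_le_exp (pp * ε / (1 - pp * ε))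
      linarith
    have h2 : 1 + pp * ε / (1 - pp * ε) = 1 / (1 - pp * ε) := by
      field_simp
      ring
    rw [hεq, ← h2]; exact h1
  -- single-step estimate
  have key2 : ∀ a : ℝ, 0 ≤ a → G (Real.exp ε * a) ≤ Real.exp (ε * q) * G a := by
    intro a ha
    rcases eq_or_lt_of_le ha with rfl | ha
    · have hG0 : G 0 = 0 := by rw [hGalt]; simp
      simp [hG0]
    · have hμ : 1 < Real.exp ε := by
        rw [← Real.exp_zero]; exact Real.exp_lt_exp.2 hε0
      have h1 := key1 a ha (Real.exp ε) hμ
      rw [Real.log_exp] at h1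
      have h2 : G (Real.exp ε * a) ≤ G a / (1 - pp * ε) := by
        rw [le_div_iff₀ hx0]; linarith
      calc G (Real.exp ε * a) ≤ G a / (1 - pp * ε) := h2
        _ = (1 / (1 - pp * ε)) * G a := by ring
        _ ≤ Real.exp (ε * q) * G a := by
            apply mul_le_mul_of_nonneg_right hKle (hGnonneg a)
  -- iterate
  have key3 : ∀ n : ℕ, ∀ a : ℝ, 0 ≤ a →
      G (Real.exp (n * ε) * a) ≤ Real.exp (ε * q * n) * G a := by
    intro n
    induction n with
    | zero => intro a ha; simp
    | succ n ih =>
      intro a ha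
      have h1 : Real.exp ((n+1 : ℕ) * ε) * a = Real.exp ε * (Real.exp (n * ε) * a) := by
        rw [← mul_assoc, ← Real.exp_add]
        push_cast; ring_nf
      rw [h1]
      calc G (Real.exp ε * (Real.exp (n * ε) * a))
          ≤ Real.exp (ε * q) * G (Real.exp (n * ε) * a) :=
            key2 _ (by positivity)
        _ ≤ Real.exp (ε * q) * (Real.exp (ε * q * n) * G a) := by
            apply mul_le_mul_of_nonneg_left (ih a ha) (Real.exp_nonneg _)
        _ = Real.exp (ε * q * (n+1 : ℕ)) * G a := by
            rw [← mul_assoc, ← Real.exp_add]; push_cast; ring_nf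
  set C : ℝ := Real.exp (ε * q) with hCdef
  have hC0 : 0 < C := Real.exp_pos _
  -- final growth bound
  have key4 : ∀ t : ℝ, 1 ≤ t → ∀ a : ℝ, 0 ≤ a → G (t * a) ≤ C * t ^ q * G a := by
    intro t ht a ha
    have ht0 : 0 < t := by linarith
    have hlt0 : 0 ≤ Real.log t := Real.log_nonneg ht
    set n : ℕ := ⌈Real.log t / ε⌉₊ with hn
    have hn1 : Real.log t ≤ n * ε := by
      rw [← div_le_iff₀ hε0]
      exact Nat.le_ceil _
    have hn2' : (n : ℝ) ≤ Real.log t / ε + 1 := by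
      exact_mod_cast (Nat.ceil_lt_add_one (R := ℝ) (a := Real.log t / ε) (by positivity)).le
    have hn2 : (n : ℝ) * ε ≤ Real.log t + ε := by
      have h := mul_le_mul_of_nonneg_right hn2' hε0.le
      rw [add_mul, div_mul_cancel₀ _ hε0.ne', one_mul] at h
      exact h
    have ht1 : t ≤ Real.exp (n * ε) := by
      calc t = Real.exp (Real.log t) := (Real.exp_log ht0).symm
        _ ≤ Real.exp (n * ε) := Real.exp_le_exp.2 hn1
    have h2 : G (t * a) ≤ G (Real.exp (n * ε) * a) := by
      apply hGmono
      exact mul_le_mul_of_nonneg_right ht1 ha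
    have h3 : Real.exp (ε * q * n) ≤ C * t ^ q := by
      have : ε * q * n ≤ ε * q + q * Real.log t := by nlinarith
      calc Real.exp (ε * q * n) ≤ Real.exp (ε * q + q * Real.log t) := Real.exp_le_exp.2 this
        _ = C * Real.exp (q * Real.log t) := by rw [Real.exp_add]
        _ = C * t ^ q := by rw [Real.rpow_def_of_pos ht0]; ring_nf
    calc G (t * a) ≤ G (Real.exp (n * ε) * a) := h2
      _ ≤ Real.exp (ε * q * n) * G a := key3 n a ha
      _ ≤ C * t ^ q * G a := mul_le_mul_of_nonneg_right h3 (hGnonneg a)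
  -- the three integral quantities
  set A : ℝ := ∫ z : EuclideanSpace ℝ (Fin N) × EuclideanSpace ℝ (Fin N),
      G (|ψ z.1 - ψ z.2| / ‖z.1 - z.2‖ ^ s) / ‖z.1 - z.2‖ ^ (N : ℝ) with hAdef
  have hAint : Integrable (fun z : EuclideanSpace ℝ (Fin N) × EuclideanSpace ℝ (Fin N) =>
      G (|ψ z.1 - ψ z.2| / ‖z.1 - z.2‖ ^ s) / ‖z.1 - z.2‖ ^ (N : ℝ)) := by
    simpa using hJint 1
  set B : ℝ := ∫ x, G |ψ x| with hBdef
  have hBint : Integrable (fun x => G |ψ x|) := by simpa using hIint 1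
  set D : ℝ := ∫ x, |ψ x| ^ θ with hDdef
  have hDc : Continuous (fun x => |ψ x| ^ θ) := by
    apply Continuous.rpow_const (hψsmooth.continuous.abs)
    intro x; right; exact hθ0.le
  have hDsupp : HasCompactSupport (fun x => |ψ x| ^ θ) := by
    apply hψsupp.comp_left (g := fun y : ℝ => |y| ^ θ)
    simp [Real.zero_rpow hθ0.ne']
  have hDint : Integrable (fun x => |ψ x| ^ θ) := hDc.integrable_of_hasCompactSupport hDsupp
  have hDpos : 0 < D := by
    rw [hDdef]
    rw [integral_pos_iff_support_of_nonneg (fun x => by positivity) hDint]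
    have hsupp : Function.support (fun x => |ψ x| ^ θ) = Function.support ψ := by
      ext x
      simp only [Function.mem_support]
      constructor
      · intro h hx; apply h; simp [hx, Real.zero_rpow hθ0.ne']
      · intro h h2
        apply h
        have := Real.rpow_natCast -- dummy
        by_contra h3
        have habs : |ψ x| ≠ 0 := abs_ne_zero.2 h3
        exact (Real.rpow_pos_of_pos (abs_pos.2 h3) θ).ne' h2
    rw [hsupp]
    have : (Function.support ψ).Nonempty := Function.support_nonempty_iff.2 hψne
    exact (hψsmooth.continuous.isOpen_support).measure_pos volume this
  -- pointwise comparisons integrated, for t ≥ 1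
  have boundJ : ∀ t : ℝ, 1 ≤ t →
      (∫ z : EuclideanSpace ℝ (Fin N) × EuclideanSpace ℝ (Fin N),
        G (|t| * (|ψ z.1 - ψ z.2| / ‖z.1 - z.2‖ ^ s)) / ‖z.1 - z.2‖ ^ (N : ℝ))
        ≤ C * t ^ q * A := by
    intro t ht
    have habs : |t| = t := abs_of_nonneg (by linarith)
    rw [hAdef, ← integral_const_mul]
    refine integral_mono (hJint t) (hAint.const_mul _) (fun z => ?_)
    set X := |ψ z.1 - ψ z.2| / ‖z.1 - z.2‖ ^ s with hX
    set w := ‖z.1 - z.2‖ ^ (N : ℝ) with hw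
    have hX0 : 0 ≤ X := by positivity
    have hw0 : 0 ≤ w := by positivity
    rcases eq_or_lt_of_le hw0 with hw1 | hw1
    · simp only [← hw1, div_zero, mul_zero]
      exact le_rfl
    · rw [habs, ← mul_div_assoc (C * t ^ q) (G X) w]
      exact (div_le_div_iff_of_pos_right hw1).2 (key4 t ht X hX0)
  have boundI : ∀ t : ℝ, 1 ≤ t →
      (∫ x, G (|t| * |ψ x|)) ≤ C * t ^ q * B := by
    intro t ht
    have habs : |t| = t := abs_of_nonneg (by linarith)
    rw [hBdef, ← integral_const_mul]
    refine integral_mono (hIint t) (hBint.const_mul _) (fun x => ?_)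
    rw [habs]
    exact key4 t ht |ψ x| (abs_nonneg _)
  have boundF : ∀ t : ℝ, 1 ≤ t →
      C₅ * t ^ θ * D ≤ ∫ x, F (t * ψ x) := by
    intro t ht
    have ht0 : (0:ℝ) < t := by linarith
    rw [hDdef, ← integral_const_mul]
    refine integral_mono (hDint.const_mul _) (hFint t) (fun x => ?_)
    have h1 : C₅ * |t * ψ x| ^ θ ≤ F (t * ψ x) := hF _
    have h2 : |t * ψ x| ^ θ = t ^ θ * |ψ x| ^ θ := by
      rw [abs_mul, abs_of_pos ht0, Real.mul_rpow ht0.le (abs_nonneg _)]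
    rw [h2] at h1
    linarith [h1]
  -- the dominating function tends to -∞
  have hφ : Filter.Tendsto (fun t : ℝ => C * t ^ q * (A + B) - C₅ * t ^ θ * D)
      Filter.atTop Filter.atBot := by
    have h1 : Filter.Tendsto (fun t : ℝ => t ^ (q - θ)) Filter.atTop (nhds 0) := by
      have := tendsto_rpow_neg_atTop (y := θ - q) (by linarith)
      simpa [neg_sub] using this
    have h2 : Filter.Tendsto (fun t : ℝ => C * (A + B) * t ^ (q - θ) - C₅ * D)
        Filter.atTop (nhds (C * (A+B) * 0 - C₅ * D)) := by
      exact ((h1.const_mul _).sub tendsto_const_nhds)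
    have h3 : Filter.Tendsto (fun t : ℝ => t ^ θ) Filter.atTop Filter.atTop :=
      tendsto_rpow_atTop hθ0
    have h4 : C * (A+B) * 0 - C₅ * D < 0 := by
      simp only [mul_zero, zero_sub]
      rw [neg_lt, neg_zero]
      positivity
    have h5 := h3.atTop_mul_neg h4 h2
    apply h5.congr'
    filter_upwards [Filter.eventually_gt_atTop (0:ℝ)] with t ht
    have hpow : t ^ (q - θ) * t ^ θ = t ^ q := by
      rw [← Real.rpow_add ht]; norm_num
    linear_combination (C * (A + B)) * hpow
  -- conclude
  apply tendsto_atBot_mono' _ _ hφ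
  filter_upwards [Filter.eventually_ge_atTop (1:ℝ)] with t ht
  have := boundJ t ht
  have := boundI t ht
  have := boundF t ht
  nlinarith
end
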